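/- The number of skew-merged involutions of length n whose longest increasing subsequence has length k equals C(n-1, k-1), and consequently the total number of skew-merged involutions of length n is 2^{n-1}. -/

import Mathlib

/-- The length of the longest increasing subsequence of a permutation:
the largest size of a set of positions on which the permutation is
strictly increasing. -/
def lisLen {n : ℕ} (σ : Equiv.Perm (Fin n)) : ℕ :=
  (Finset.univ.filter (fun s : Finset (Fin n) =>
    ∀ i ∈ s, ∀ j ∈ s, i < j → σ i < σ j)).sup Finset.card


/-- σ contains the pattern 2143. -/
def Contains2143 {n : ℕ} (σ : Equiv.Perm (Fin n)) : Prop :=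
  ∃ i1 i2 i3 i4 : Fin n, i1 < i2 ∧ i2 < i3 ∧ i3 < i4 ∧
    σ i2 < σ i1 ∧ σ i1 < σ i4 ∧ σ i4 < σ i3

/-- σ contains the pattern 3412. -/
def Contains3412 {n : ℕ} (σ : Equiv.Perm (Fin n)) : Prop :=
  ∃ i1 i2 i3 i4 : Fin n, i1 < i2 ∧ i2 < i3 ∧ i3 < i4 ∧
    σ i3 < σ i4 ∧ σ i4 < σ i1 ∧ σ i1 < σ i2

/-- A permutation is skew-merged iff it avoids 2143 and 3412. -/
def SkewMerged {n : ℕ} (σ : Equiv.Perm (Fin n)) : Prop :=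
  ¬ Contains2143 σ ∧ ¬ Contains3412 σ

namespace SMAux

open Finset Function

variable {m : ℕ}

/-- A permutation is decreasing on its set of moved points. -/
def Dec (σ : Equiv.Perm (Fin (m + 1))) : Prop :=
  ∀ ⦃x y : Fin (m + 1)⦄, σ x ≠ x → σ y ≠ y → x < y → σ y < σ x

theorem Dec.skewMerged {σ : Equiv.Perm (Fin (m + 1))} (hd : Dec σ) : SkewMerged σ := by
  constructor
  · rintro ⟨i1, i2, i3, i4, h12, h23, h34, p1, p2, p3⟩
    have m12 : σ i1 ≠ i1 ∨ σ i2 ≠ i2 := by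
      by_contra h; push_neg at h
      rw [h.1, h.2] at p1; exact absurd h12 (not_lt.2 p1.le)
    have m34 : σ i3 ≠ i3 ∨ σ i4 ≠ i4 := by
      by_contra h; push_neg at h
      rw [h.1, h.2] at p3; exact absurd h34 (not_lt.2 p3.le)
    rcases m12 with h1 | h2 <;> rcases m34 with h3 | h4
    · exact absurd (p2.trans p3) (not_lt.2 (hd h1 h3 (h12.trans h23)).le)
    · exact absurd p2 (not_lt.2 (hd h1 h4 ((h12.trans h23).trans h34)).le)
    · exact absurd (p1.trans (p2.trans p3)) (not_lt.2 (hd h2 h3 h23).le)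
    · exact absurd (p1.trans p2) (not_lt.2 (hd h2 h4 (h23.trans h34)).le)
  · rintro ⟨i1, i2, i3, i4, h12, h23, h34, q1, q2, q3⟩
    have f12 : σ i1 = i1 ∨ σ i2 = i2 := by
      by_contra h; push_neg at h
      exact absurd q3 (not_lt.2 (hd h.1 h.2 h12).le)
    have f34 : σ i3 = i3 ∨ σ i4 = i4 := by
      by_contra h; push_neg at h
      exact absurd q1 (not_lt.2 (hd h.1 h.2 h34).le)
    rcases f12 with h1 | h2 <;> rcases f34 with h3 | h4
    · have hq := q1.trans q2
      rw [h1, h3] at hq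
      exact absurd (h12.trans h23) (not_lt.2 hq.le)
    · have hq := q2
      rw [h1, h4] at hq
      exact absurd ((h12.trans h23).trans h34) (not_lt.2 hq.le)
    · have hq := q1.trans (q2.trans q3)
      rw [h2, h3] at hq
      exact absurd h23 (not_lt.2 hq.le)
    · have hq := q2.trans q3
      rw [h2, h4] at hq
      exact absurd (h23.trans h34) (not_lt.2 hq.le)

theorem nested_of_skewMerged {σ : Equiv.Perm (Fin (m + 1))} (hI : ∀ x, σ (σ x) = x)
    (hs : SkewMerged σ) : ∀ ⦃x y⦄, x < σ x → y < σ y → x < y → σ y < σ x := by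
  intro x y hx hy hxy
  by_contra hc
  push_neg at hc
  have hne : σ x ≠ σ y := fun h => absurd (σ.injective h) hxy.ne
  have hlt : σ x < σ y := hc.lt_of_ne hne
  have hyne : y ≠ σ x := by
    rintro rfl
    rw [hI] at hy
    exact absurd (hxy.trans hy) (lt_irrefl x)
  rcases hyne.lt_or_gt with h1 | h2
  · exact hs.2 ⟨x, y, σ x, σ y, hxy, h1, hlt, by rw [hI, hI]; exact hxy, by rw [hI]; exact h1, hlt⟩
  · exact hs.1 ⟨x, σ x, y, σ y, hx, h2, hy, by rw [hI]; exact hx, by rw [hI]; exact h2, by rw [hI]; exact hy⟩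

theorem dec_of_skewMerged {σ : Equiv.Perm (Fin (m + 1))} (hI : ∀ x, σ (σ x) = x)
    (hs : SkewMerged σ) : Dec σ := by
  have N := nested_of_skewMerged hI hs
  intro x y hx hy hxy
  rcases hx.lt_or_gt with hx2 | hx1
  · -- σ x < x
    rcases hy.lt_or_gt with hy2 | hy1
    · -- σ y < y ; goal : σ y < σ x
      rcases lt_trichotomy (σ x) (σ y) with h | h | h
      · have h1 : σ x < σ (σ x) := by rw [hI]; exact hx2
        have h2 : σ y < σ (σ y) := by rw [hI]; exact hy2
        have := N h1 h2 h
        rw [hI, hI] at this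
        exact absurd (hxy.trans this) (lt_irrefl x)
      · exact absurd (σ.injective h) hxy.ne
      · exact h
    · -- σ x < x,  y < σ y : impossible
      have h1 : σ x < σ (σ x) := by rw [hI]; exact hx2
      have := N h1 hy1 (hx2.trans hxy)
      rw [hI] at this
      exact absurd ((hxy.trans hy1).trans this) (lt_irrefl x)
  · -- x < σ x
    rcases hy.lt_or_gt with hy2 | hy1
    · -- σ y < y
      have h2 : σ y < σ (σ y) := by rw [hI]; exact hy2
      rcases lt_trichotomy x (σ y) with h | h | h
      · have := N hx1 h2 h
        rw [hI] at this
        exact hy2.trans this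
      · have : σ x = y := by rw [h, hI]
        rw [this, ← h]
        exact hxy
      · exact h.trans hx1
    · exact N hx1 hy1 hxy

end SMAux

namespace SMAux

open Finset Function

variable {m : ℕ}

/-! ### The construction of the nested involution attached to a finset -/

noncomputable def idx (T : Finset (Fin m)) : Fin T.card → Fin m := T.orderEmbOfFin rfl

lemma idx_lt_idx {T : Finset (Fin m)} {r r' : Fin T.card} : idx T r < idx T r' ↔ r < r' :=
  (T.orderEmbOfFin rfl).lt_iff_lt

lemma idx_le_idx {T : Finset (Fin m)} {r r' : Fin T.card} : idx T r ≤ idx T r' ↔ r ≤ r' :=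
  (T.orderEmbOfFin rfl).le_iff_le

lemma idx_injective {T : Finset (Fin m)} : Injective (idx T) :=
  (T.orderEmbOfFin rfl).injective

lemma idx_mem {T : Finset (Fin m)} (r : Fin T.card) : idx T r ∈ T :=
  T.orderEmbOfFin_mem rfl r

lemma idx_surj {T : Finset (Fin m)} {t : Fin m} (ht : t ∈ T) : ∃ r, idx T r = t := by
  have := T.range_orderEmbOfFin rfl
  have : t ∈ Set.range (T.orderEmbOfFin rfl) := by rw [this]; exact_mod_cast ht
  exact this

noncomputable def AA (T : Finset (Fin m)) (r : Fin T.card) : Fin (m + 1) :=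
  (idx T r).castSucc

noncomputable def BB (T : Finset (Fin m)) (r : Fin T.card) : Fin (m + 1) :=
  (idx T r.rev).succ

lemma val_AA {T : Finset (Fin m)} (r : Fin T.card) : (AA T r).val = (idx T r).val := rfl

lemma val_BB {T : Finset (Fin m)} (r : Fin T.card) : (BB T r).val = (idx T r.rev).val + 1 := rfl

lemma AA_lt_BB {T : Finset (Fin m)} {r r' : Fin T.card} (hr : 2 * r.val < T.card)
    (hr' : 2 * r'.val < T.card) : AA T r < BB T r' := by
  have h1 : r ≤ r'.rev := by
    rw [Fin.le_def, Fin.val_rev]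
    omega
  have h2 : idx T r ≤ idx T r'.rev := idx_le_idx.2 h1
  rw [Fin.lt_def, val_AA, val_BB]
  omega

lemma AA_ne_BB {T : Finset (Fin m)} {r r' : Fin T.card} (hr : 2 * r.val < T.card)
    (hr' : 2 * r'.val < T.card) : AA T r ≠ BB T r' :=
  (AA_lt_BB hr hr').ne

lemma AA_injective {T : Finset (Fin m)} : Injective (AA T) := fun r r' h =>
  idx_injective (Fin.castSucc_injective _ h)

lemma BB_injective {T : Finset (Fin m)} : Injective (BB T) := fun r r' h =>
  Fin.rev_injective (idx_injective (Fin.succ_injective _ h))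

open Classical in
noncomputable def ff (T : Finset (Fin m)) (x : Fin (m + 1)) : Fin (m + 1) :=
  if hx : ∃ r, 2 * r.val < T.card ∧ x = AA T r then BB T hx.choose
  else if hx' : ∃ r, 2 * r.val < T.card ∧ x = BB T r then AA T hx'.choose
  else x

lemma ff_AA {T : Finset (Fin m)} {r : Fin T.card} (hr : 2 * r.val < T.card) :
    ff T (AA T r) = BB T r := by
  have hx : ∃ r', 2 * r'.val < T.card ∧ AA T r = AA T r' := ⟨r, hr, rfl⟩
  rw [ff, dif_pos hx]
  obtain ⟨h1, h2⟩ := hx.choose_spec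
  rw [AA_injective h2.symm]

lemma ff_BB {T : Finset (Fin m)} {r : Fin T.card} (hr : 2 * r.val < T.card) :
    ff T (BB T r) = AA T r := by
  have hno : ¬ ∃ r', 2 * r'.val < T.card ∧ BB T r = AA T r' := by
    rintro ⟨r', hr', he⟩
    exact AA_ne_BB hr' hr he.symm
  have hx : ∃ r', 2 * r'.val < T.card ∧ BB T r = BB T r' := ⟨r, hr, rfl⟩
  rw [ff, dif_neg hno, dif_pos hx]
  obtain ⟨h1, h2⟩ := hx.choose_spec
  rw [BB_injective h2.symm]

lemma ff_fix {T : Finset (Fin m)} {x : Fin (m + 1)}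
    (hx : ∀ r : Fin T.card, 2 * r.val < T.card → x ≠ AA T r ∧ x ≠ BB T r) : ff T x = x := by
  have h1 : ¬ ∃ r, 2 * r.val < T.card ∧ x = AA T r := by
    rintro ⟨r, hr, he⟩; exact (hx r hr).1 he
  have h2 : ¬ ∃ r, 2 * r.val < T.card ∧ x = BB T r := by
    rintro ⟨r, hr, he⟩; exact (hx r hr).2 he
  rw [ff, dif_neg h1, dif_neg h2]

lemma ff_invol (T : Finset (Fin m)) : Involutive (ff T) := by
  intro x
  by_cases hx : ∃ r, 2 * r.val < T.card ∧ x = AA T r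
  · obtain ⟨r, hr, rfl⟩ := hx
    rw [ff_AA hr, ff_BB hr]
  · by_cases hx' : ∃ r, 2 * r.val < T.card ∧ x = BB T r
    · obtain ⟨r, hr, rfl⟩ := hx'
      rw [ff_BB hr, ff_AA hr]
    · push_neg at hx hx'
      have hfix : ff T x = x := ff_fix (fun r hr => ⟨hx r hr, hx' r hr⟩)
      rw [hfix, hfix]

noncomputable def ψ (T : Finset (Fin m)) : Equiv.Perm (Fin (m + 1)) :=
  (ff_invol T).toPerm

lemma ψ_apply (T : Finset (Fin m)) (x : Fin (m + 1)) : ψ T x = ff T x := rfl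

lemma ψ_inv (T : Finset (Fin m)) : (ψ T)⁻¹ = ψ T := rfl

lemma moved_iff {T : Finset (Fin m)} {x : Fin (m + 1)} :
    ψ T x ≠ x ↔ ∃ r : Fin T.card, 2 * r.val < T.card ∧ (x = AA T r ∨ x = BB T r) := by
  constructor
  · intro h
    by_contra hc
    push_neg at hc
    exact h (ff_fix fun r hr => hc r hr)
  · rintro ⟨r, hr, rfl | rfl⟩
    · rw [ψ_apply, ff_AA hr]
      exact (AA_ne_BB hr hr).symm
    · rw [ψ_apply, ff_BB hr]
      exact AA_ne_BB hr hr

lemma dec_ψ (T : Finset (Fin m)) : Dec (ψ T) := by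
  intro x y hx hy hxy
  rw [moved_iff] at hx hy
  obtain ⟨r, hr, hxr⟩ := hx
  obtain ⟨r', hr', hyr⟩ := hy
  rcases hxr with rfl | rfl <;> rcases hyr with rfl | rfl
  · rw [ψ_apply, ψ_apply, ff_AA hr, ff_AA hr']
    have h1 : r < r' := by
      have := hxy
      rw [Fin.lt_def, val_AA, val_AA, ← Fin.lt_def] at this
      exact idx_lt_idx.1 this
    have h2 : r'.rev < r.rev := by rw [Fin.rev_lt_rev]; exact h1
    rw [Fin.lt_def, val_BB, val_BB]
    have := idx_lt_idx.2 h2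
    omega
  · rw [ψ_apply, ψ_apply, ff_AA hr, ff_BB hr']
    exact AA_lt_BB hr' hr
  · exact absurd (AA_lt_BB hr' hr) (not_lt.2 hxy.le)
  · rw [ψ_apply, ψ_apply, ff_BB hr, ff_BB hr']
    have h1 : r.rev < r'.rev := by
      have := hxy
      rw [Fin.lt_def, val_BB, val_BB] at this
      have : idx T r.rev < idx T r'.rev := by rw [Fin.lt_def]; omega
      exact idx_lt_idx.1 this
    have h2 : r' < r := by rwa [Fin.rev_lt_rev] at h1
    rw [Fin.lt_def, val_AA, val_AA]
    have := idx_lt_idx.2 h2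
    omega

end SMAux

namespace SMAux

open Finset Function

variable {m : ℕ}

/-! ### Cardinality helpers -/

lemma card_filter_val_lt {j : ℕ} {c : ℕ} (hc : c ≤ j) :
    ((univ : Finset (Fin j)).filter (fun r => r.val < c)).card = c := by
  have himg : ((univ : Finset (Fin j)).filter (fun r => r.val < c)).image Fin.val
      = Finset.range c := by
    ext a
    simp only [mem_image, mem_filter, mem_univ, true_and, mem_range]
    constructor
    · rintro ⟨r, hr, rfl⟩; exact hr
    · intro ha; exact ⟨⟨a, lt_of_lt_of_le ha hc⟩, ha, rfl⟩
  have hci := Finset.card_image_of_injective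
    ((univ : Finset (Fin j)).filter (fun r => r.val < c)) Fin.val_injective
  rw [himg, card_range] at hci
  exact hci.symm

lemma card_bots (T : Finset (Fin m)) :
    ((univ : Finset (Fin T.card)).filter fun r => 2 * r.val < T.card).card
      = (T.card + 1) / 2 := by
  have he : ((univ : Finset (Fin T.card)).filter fun r => 2 * r.val < T.card)
      = (univ : Finset (Fin T.card)).filter fun r => r.val < (T.card + 1) / 2 := by
    ext r
    simp only [mem_filter, mem_univ, true_and]
    omega
  rw [he, card_filter_val_lt (by omega)]

lemma card_moved (T : Finset (Fin m)) :
    ((univ : Finset (Fin (m + 1))).filter fun x => ψ T x ≠ x).card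
      = 2 * ((T.card + 1) / 2) := by
  classical
  have hM : ((univ : Finset (Fin (m + 1))).filter fun x => ψ T x ≠ x)
      = ((univ : Finset (Fin T.card)).filter fun r => 2 * r.val < T.card).image (AA T)
        ∪ ((univ : Finset (Fin T.card)).filter fun r => 2 * r.val < T.card).image (BB T) := by
    ext x
    simp only [mem_filter, mem_univ, true_and, mem_union, mem_image]
    rw [moved_iff]
    constructor
    · rintro ⟨r, hr, rfl | rfl⟩
      · exact Or.inl ⟨r, hr, rfl⟩
      · exact Or.inr ⟨r, hr, rfl⟩
    · rintro (⟨r, hr, rfl⟩ | ⟨r, hr, rfl⟩)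
      · exact ⟨r, hr, Or.inl rfl⟩
      · exact ⟨r, hr, Or.inr rfl⟩
  have hdisj : Disjoint
      (((univ : Finset (Fin T.card)).filter fun r => 2 * r.val < T.card).image (AA T))
      (((univ : Finset (Fin T.card)).filter fun r => 2 * r.val < T.card).image (BB T)) := by
    rw [disjoint_left]
    rintro x hx hx'
    simp only [mem_image, mem_filter, mem_univ, true_and] at hx hx'
    obtain ⟨r, hr, rfl⟩ := hx
    obtain ⟨r', hr', he⟩ := hx'
    exact AA_ne_BB hr hr' he.symm
  rw [hM, card_union_of_disjoint hdisj, card_image_of_injective _ AA_injective,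
    card_image_of_injective _ BB_injective, card_bots]
  omega

lemma card_fixed (T : Finset (Fin m)) :
    ((univ : Finset (Fin (m + 1))).filter fun x => ψ T x = x).card
      = (m + 1) - 2 * ((T.card + 1) / 2) := by
  classical
  have h1 := card_filter_add_card_filter_not
    (s := (univ : Finset (Fin (m + 1)))) (p := fun x => ψ T x = x)
  have h2 : ((univ : Finset (Fin (m + 1))).filter fun x => ¬ ψ T x = x).card
      = 2 * ((T.card + 1) / 2) := card_moved T
  have h3 : (univ : Finset (Fin (m + 1))).card = m + 1 := by simp
  omega

lemma le_lisLen {N : ℕ} {σ : Equiv.Perm (Fin N)} {s : Finset (Fin N)}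
    (hs : ∀ i ∈ s, ∀ j ∈ s, i < j → σ i < σ j) : s.card ≤ lisLen σ :=
  Finset.le_sup (f := Finset.card) (Finset.mem_filter.2 ⟨Finset.mem_univ _, hs⟩)

lemma lisLen_le {N K : ℕ} {σ : Equiv.Perm (Fin N)}
    (h : ∀ s : Finset (Fin N), (∀ i ∈ s, ∀ j ∈ s, i < j → σ i < σ j) → s.card ≤ K) :
    lisLen σ ≤ K :=
  Finset.sup_le fun s hs => h s (Finset.mem_filter.1 hs).2

lemma card_T_le (T : Finset (Fin m)) : T.card ≤ m := by
  simpa using T.card_le_univ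

lemma lis_ψ (T : Finset (Fin m)) : lisLen (ψ T) = (m + 1) - T.card := by
  classical
  have hjm : T.card ≤ m := card_T_le T
  have hFcard := card_fixed T
  apply le_antisymm
  · -- upper bound
    apply lisLen_le
    intro s hs
    rcases Nat.eq_zero_or_pos T.card with hj0 | hjpos
    · have hle : s.card ≤ m + 1 := by simpa using s.card_le_univ
      omega
    have hsplitcard := card_filter_add_card_filter_not (s := s)
      (p := fun x => ψ T x = x)
    have hsM1 : (s.filter fun x => ¬ ψ T x = x).card ≤ 1 := by
      rw [card_le_one]
      intro x hx y hy
      rw [mem_filter] at hx hy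
      by_contra hne
      rcases Ne.lt_or_gt hne with h | h
      · exact absurd (hs x hx.1 y hy.1 h) (not_lt.2 (dec_ψ T hx.2 hy.2 h).le)
      · exact absurd (hs y hy.1 x hx.1 h) (not_lt.2 (dec_ψ T hy.2 hx.2 h).le)
    have hsF : s.filter (fun x => ψ T x = x)
        ⊆ (univ : Finset (Fin (m + 1))).filter fun x => ψ T x = x := by
      intro x hx
      exact mem_filter.2 ⟨mem_univ _, (mem_filter.1 hx).2⟩
    have hsFle := card_le_card hsF
    rcases Nat.even_or_odd T.card with he | ho
    · -- even case
      have hepar : T.card % 2 = 0 := Nat.even_iff.1 he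
      rcases (s.filter fun x => ¬ ψ T x = x).eq_empty_or_nonempty with hM0 | hMne
      · rw [hM0, card_empty] at hsplitcard
        omega
      obtain ⟨x₀, hx₀⟩ := hMne
      obtain ⟨hx₀s, hx₀m⟩ := mem_filter.1 hx₀
      have hj2 : 2 ≤ T.card := by omega
      set rnext : Fin T.card := ⟨T.card / 2, by omega⟩ with hrn
      have hrnv : rnext.val = T.card / 2 := rfl
      have hgfix : ψ T (idx T rnext).castSucc = (idx T rnext).castSucc := by
        rw [ψ_apply]
        apply ff_fix
        intro r hr
        constructor
        · intro hgA
          have hAA : AA T rnext = AA T r := hgA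
          have := AA_injective hAA
          rw [← this] at hr
          omega
        · intro hgB
          have hv : (idx T rnext).val = (idx T r.rev).val + 1 := by
            have := congrArg Fin.val hgB
            simpa [val_BB] using this
          have hrev : rnext ≤ r.rev := by
            rw [Fin.le_def, Fin.val_rev]
            omega
          have := idx_le_idx.2 hrev
          rw [Fin.le_def] at this
          omega
      have hrevle : ∀ r : Fin T.card, 2 * r.val < T.card → rnext ≤ r.rev := by
        intro r hr
        rw [Fin.le_def, Fin.val_rev]
        omega
      have hgns : (idx T rnext).castSucc ∉ s := by
        intro hgs
        obtain ⟨r, hr, hx₀r | hx₀r⟩ := moved_iff.1 hx₀m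
        · -- x₀ = AA r
          have hrlt : r < rnext := by
            rw [Fin.lt_def, hrnv]
            omega
          have hidx := idx_lt_idx.2 hrlt
          rw [Fin.lt_def] at hidx
          have h1 : x₀ < (idx T rnext).castSucc := by
            rw [hx₀r, Fin.lt_def, val_AA]
            exact hidx
          have h2 := hs x₀ hx₀s _ hgs h1
          rw [hgfix, hx₀r, ψ_apply, ff_AA hr] at h2
          have h3 := idx_le_idx.2 (hrevle r hr)
          rw [Fin.le_def] at h3
          rw [Fin.lt_def, val_BB] at h2
          simp only [Fin.coe_castSucc] at h2
          omega
        · -- x₀ = BB r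
          have h3 := idx_le_idx.2 (hrevle r hr)
          rw [Fin.le_def] at h3
          have h1 : (idx T rnext).castSucc < x₀ := by
            rw [hx₀r, Fin.lt_def, val_BB]
            simp only [Fin.coe_castSucc]
            omega
          have h2 := hs _ hgs x₀ hx₀s h1
          rw [hgfix, hx₀r, ψ_apply, ff_BB hr] at h2
          have hrlt : r < rnext := by
            rw [Fin.lt_def, hrnv]
            omega
          have hidx := idx_lt_idx.2 hrlt
          rw [Fin.lt_def] at hidx
          rw [Fin.lt_def, val_AA] at h2
          simp only [Fin.coe_castSucc] at h2
          omega
      have hgF : (idx T rnext).castSucc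
          ∈ (univ : Finset (Fin (m + 1))).filter fun x => ψ T x = x :=
        mem_filter.2 ⟨mem_univ _, hgfix⟩
      have hsub : s.filter (fun x => ψ T x = x)
          ⊆ ((univ : Finset (Fin (m + 1))).filter fun x => ψ T x = x).erase
            (idx T rnext).castSucc := by
        intro x hx
        rw [mem_erase]
        refine ⟨fun h => hgns (h ▸ (mem_filter.1 hx).1), hsF hx⟩
      have hle := card_le_card hsub
      rw [card_erase_of_mem hgF] at hle
      omega
    · -- odd case
      have hopar : T.card % 2 = 1 := Nat.odd_iff.1 ho
      omega
  · -- lower bound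
    rcases Nat.even_or_odd T.card with he | ho
    · have hepar : T.card % 2 = 0 := Nat.even_iff.1 he
      have hFc : ((univ : Finset (Fin (m + 1))).filter fun x => ψ T x = x).card
          = m + 1 - T.card := by omega
      rw [← hFc]
      apply le_lisLen
      intro i hi k hk hik
      rw [(mem_filter.1 hi).2, (mem_filter.1 hk).2]
      exact hik
    · have hopar : T.card % 2 = 1 := Nat.odd_iff.1 ho
      have hjpos : 1 ≤ T.card := by omega
      set mid : Fin T.card := ⟨T.card / 2, by omega⟩ with hmid
      have hmidv : mid.val = T.card / 2 := rfl
      have hmidb : 2 * mid.val < T.card := by omega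
      have hrevmid : mid.rev = mid := by
        apply Fin.ext
        rw [Fin.val_rev, hmidv]
        omega
      have hBBmid : (BB T mid).val = (idx T mid).val + 1 := by
        rw [val_BB, hrevmid]
      have hAAmoved : ψ T (AA T mid) ≠ AA T mid := moved_iff.2 ⟨mid, hmidb, Or.inl rfl⟩
      have hAAnF : AA T mid ∉ (univ : Finset (Fin (m + 1))).filter fun x => ψ T x = x := by
        intro h
        exact hAAmoved (mem_filter.1 h).2
      have hcard : (insert (AA T mid)
          ((univ : Finset (Fin (m + 1))).filter fun x => ψ T x = x)).card
          = ((univ : Finset (Fin (m + 1))).filter fun x => ψ T x = x).card + 1 :=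
        card_insert_of_notMem hAAnF
      have hge : (m + 1) - T.card ≤ (insert (AA T mid)
          ((univ : Finset (Fin (m + 1))).filter fun x => ψ T x = x)).card := by
        omega
      refine le_trans hge (le_lisLen ?_)
      intro i hi k hk hik
      rcases mem_insert.1 hi with rfl | hiF <;> rcases mem_insert.1 hk with hk' | hkF
      · rw [hk'] at hik
        exact absurd hik (lt_irrefl _)
      · rw [(mem_filter.1 hkF).2, ψ_apply, ff_AA hmidb]
        have hkm : k ≠ BB T mid := by
          intro h
          exact (moved_iff.2 ⟨mid, hmidb, Or.inr h⟩) (mem_filter.1 hkF).2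
        have hkv : k.val ≠ (idx T mid).val + 1 := by
          intro hv
          exact hkm (Fin.ext (by rw [hBBmid, hv]))
        rw [Fin.lt_def] at hik ⊢
        rw [val_AA] at hik
        rw [hBBmid]
        omega
      · rw [(mem_filter.1 hiF).2, hk', ψ_apply, ff_AA hmidb]
        rw [hk'] at hik
        rw [Fin.lt_def] at hik ⊢
        rw [val_AA] at hik
        rw [hBBmid]
        omega
      · rw [(mem_filter.1 hiF).2, (mem_filter.1 hkF).2]
        exact hik

end SMAux

namespace SMAux

open Finset Function

variable {m : ℕ}

/-! ### Injectivity -/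

lemma mem_T_iff (T : Finset (Fin m)) (t : Fin m) :
    t ∈ T ↔ (t.castSucc < ψ T t.castSucc ∨ ψ T t.succ < t.succ) := by
  constructor
  · intro ht
    obtain ⟨r, hr⟩ := idx_surj ht
    by_cases hb : 2 * r.val < T.card
    · left
      have hAA : t.castSucc = AA T r := by rw [← hr]; rfl
      rw [hAA, ψ_apply, ff_AA hb]
      exact AA_lt_BB hb hb
    · right
      have hrlt := r.isLt
      have hb' : 2 * r.rev.val < T.card := by
        rw [Fin.val_rev]
        omega
      have hBB : BB T r.rev = t.succ := by rw [BB, Fin.rev_rev, hr]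
      rw [← hBB, ψ_apply, ff_BB hb']
      exact AA_lt_BB hb' hb'
  · intro h
    rcases h with h | h
    · obtain ⟨r, hr, hc⟩ := moved_iff.1 (ne_of_gt h)
      rcases hc with hc | hc
      · have ht : t = idx T r := Fin.castSucc_injective _ hc
        rw [ht]
        exact idx_mem r
      · rw [hc, ψ_apply, ff_BB hr] at h
        exact absurd h (not_lt.2 (AA_lt_BB hr hr).le)
    · obtain ⟨r, hr, hc⟩ := moved_iff.1 (ne_of_lt h)
      rcases hc with hc | hc
      · rw [hc, ψ_apply, ff_AA hr] at h
        exact absurd h (not_lt.2 (AA_lt_BB hr hr).le)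
      · have ht : t = idx T r.rev := Fin.succ_injective _ hc
        rw [ht]
        exact idx_mem _

lemma ψ_injective {T T' : Finset (Fin m)} (h : ψ T = ψ T') : T = T' := by
  ext t
  rw [mem_T_iff T t, mem_T_iff T' t, h]

/-! ### Rank machinery -/

lemma downclosed_mem_iff {j : ℕ} {U : Finset (Fin j)}
    (hU : ∀ r ∈ U, ∀ r' : Fin j, r' < r → r' ∈ U) {r : Fin j} :
    r ∈ U ↔ r.val < U.card := by
  constructor
  · intro hr
    have hsub : (univ : Finset (Fin j)).filter (fun v => v.val < r.val + 1) ⊆ U := by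
      intro v hv
      rw [mem_filter] at hv
      rcases eq_or_lt_of_le (Nat.lt_succ_iff.1 hv.2) with he | hl
      · have hv' : v = r := Fin.ext he
        rw [hv']
        exact hr
      · exact hU r hr v (by rwa [Fin.lt_def])
    have hc := card_le_card hsub
    rw [card_filter_val_lt (Nat.succ_le_of_lt r.isLt)] at hc
    omega
  · intro hcard
    by_contra hr
    have hsub : U ⊆ (univ : Finset (Fin j)).filter (fun v => v.val < r.val) := by
      intro u hu
      rw [mem_filter]
      refine ⟨mem_univ _, ?_⟩
      by_contra hge
      push_neg at hge
      rcases eq_or_lt_of_le hge with he | hl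
      · have hru : u = r := Fin.ext he.symm
        exact hr (hru ▸ hu)
      · exact hr (hU u hu r (by rwa [Fin.lt_def]))
    have hc := card_le_card hsub
    rw [card_filter_val_lt (le_of_lt r.isLt)] at hc
    omega

lemma idx_mem_initial {T S : Finset (Fin m)} (hST : S ⊆ T)
    (hsplit : ∀ s ∈ S, ∀ u ∈ T, u ∉ S → s < u) (r : Fin T.card) :
    idx T r ∈ S ↔ r.val < S.card := by
  classical
  have hUd : ∀ a ∈ (univ : Finset (Fin T.card)).filter (fun a => idx T a ∈ S),
      ∀ a' : Fin T.card, a' < a → a' ∈ (univ : Finset (Fin T.card)).filter (fun a => idx T a ∈ S) := by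
    intro a ha a' ha'
    rw [mem_filter] at ha ⊢
    refine ⟨mem_univ _, ?_⟩
    by_contra hns
    have h1 := hsplit (idx T a) ha.2 (idx T a') (idx_mem a') hns
    exact absurd (idx_lt_idx.2 ha') (not_lt.2 h1.le)
  have hUcard : ((univ : Finset (Fin T.card)).filter (fun a => idx T a ∈ S)).card = S.card := by
    have himg : ((univ : Finset (Fin T.card)).filter (fun a => idx T a ∈ S)).image (idx T) = S := by
      ext x
      simp only [mem_image, mem_filter, mem_univ, true_and]
      constructor
      · rintro ⟨a, ha, rfl⟩
        exact ha
      · intro hx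
        obtain ⟨a, ha⟩ := idx_surj (hST hx)
        exact ⟨a, by rw [ha]; exact hx, ha⟩
    have hcard := card_image_of_injective
      ((univ : Finset (Fin T.card)).filter (fun a => idx T a ∈ S)) idx_injective
    rw [himg] at hcard
    exact hcard.symm
  have hiff := downclosed_mem_iff hUd (r := r)
  rw [hUcard, mem_filter] at hiff
  constructor
  · intro h
    exact hiff.1 ⟨mem_univ _, h⟩
  · intro h
    exact (hiff.2 h).2

/-! ### Uniqueness of decreasing involutions with a given moved set -/

lemma perm_eq_of_dec {σ τ : Equiv.Perm (Fin (m + 1))} (hσ : ∀ x, σ (σ x) = x)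
    (hτ : ∀ x, τ (τ x) = x) (hσd : Dec σ) (hτd : Dec τ)
    (hM : ∀ x, σ x ≠ x ↔ τ x ≠ x) : σ = τ := by
  classical
  set M := (univ : Finset (Fin (m + 1))).filter (fun x => σ x ≠ x) with hMdef
  have hmemM : ∀ x, x ∈ M ↔ σ x ≠ x := by
    intro x
    rw [hMdef, mem_filter]
    simp
  have hesurj : ∀ x ∈ M, ∃ r : Fin M.card, M.orderEmbOfFin rfl r = x := by
    intro x hx
    have h1 := M.range_orderEmbOfFin (rfl : M.card = M.card)
    have h2 : x ∈ Set.range (M.orderEmbOfFin rfl) := by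
      rw [h1]
      exact_mod_cast hx
    exact h2
  have key : ∀ (π : Equiv.Perm (Fin (m + 1))), (∀ x, π (π x) = x) → Dec π →
      (∀ x, π x ≠ x ↔ x ∈ M) → ∀ r : Fin M.card,
        π (M.orderEmbOfFin rfl r) = M.orderEmbOfFin rfl r.rev := by
    intro π hπ hπd hπM
    have hmoved : ∀ r : Fin M.card, π (M.orderEmbOfFin rfl r) ≠ M.orderEmbOfFin rfl r :=
      fun r => (hπM _).2 (M.orderEmbOfFin_mem rfl r)
    have hriA : StrictAnti (fun r : Fin M.card => π (M.orderEmbOfFin rfl r)) := by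
      intro a b hab
      exact hπd (hmoved a) (hmoved b) ((M.orderEmbOfFin rfl).strictMono hab)
    have hmono : StrictMono (fun r : Fin M.card => π (M.orderEmbOfFin rfl r.rev)) := by
      intro a b hab
      exact hriA (by rwa [Fin.rev_lt_rev])
    have hmem : ∀ r : Fin M.card, π (M.orderEmbOfFin rfl r.rev) ∈ M := by
      intro r
      have h1 : π (M.orderEmbOfFin rfl r.rev) ≠ M.orderEmbOfFin rfl r.rev := hmoved r.rev
      have h2 : π (π (M.orderEmbOfFin rfl r.rev)) ≠ π (M.orderEmbOfFin rfl r.rev) := by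
        rw [hπ]
        exact h1.symm
      exact (hπM _).1 h2
    have huniq := orderEmbOfFin_unique (rfl : M.card = M.card) hmem hmono
    intro r
    have hh := congrFun huniq r.rev
    simp only [Fin.rev_rev] at hh
    exact hh
  have hkσ := key σ hσ hσd (fun x => (hmemM x).symm)
  have hkτ := key τ hτ hτd (fun x => ((hM x).symm).trans ((hmemM x).symm))
  ext x
  by_cases hx : x ∈ M
  · obtain ⟨r, rfl⟩ := hesurj x hx
    rw [hkσ, hkτ]
  · have h1 : σ x = x := by
      by_contra h
      exact hx ((hmemM x).2 h)
    have h2 : τ x = x := by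
      by_contra h
      exact hx ((hmemM x).2 ((hM x).2 h))
    rw [h1, h2]

end SMAux

namespace SMAux

open Finset Function

variable {m : ℕ}

/-! ### Surjectivity -/

lemma ψ_surjective {σ : Equiv.Perm (Fin (m + 1))} (hI : ∀ x, σ (σ x) = x)
    (hs : SkewMerged σ) : ∃ T, ψ T = σ := by
  classical
  have hd : Dec σ := dec_of_skewMerged hI hs
  set LL := (univ : Finset (Fin m)).filter (fun t => t.castSucc < σ t.castSucc) with hLLdef
  set RR := (univ : Finset (Fin m)).filter (fun t => σ t.succ < t.succ) with hRRdef
  set T := (univ : Finset (Fin m)).filter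
      (fun t => t.castSucc < σ t.castSucc ∨ σ t.succ < t.succ) with hTdef
  have hmemLL : ∀ t, t ∈ LL ↔ t.castSucc < σ t.castSucc := by
    intro t; rw [hLLdef, mem_filter]; simp
  have hmemRR : ∀ t, t ∈ RR ↔ σ t.succ < t.succ := by
    intro t; rw [hRRdef, mem_filter]; simp
  have hTun : ∀ t, t ∈ T ↔ t ∈ LL ∨ t ∈ RR := by
    intro t; rw [hTdef, mem_filter, hmemLL, hmemRR]; simp
  set L := (univ : Finset (Fin (m + 1))).filter (fun x => x < σ x) with hLdef
  set R := (univ : Finset (Fin (m + 1))).filter (fun x => σ x < x) with hRdef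
  have hmemL : ∀ x, x ∈ L ↔ x < σ x := by intro x; rw [hLdef, mem_filter]; simp
  have hmemR : ∀ x, x ∈ R ↔ σ x < x := by intro x; rw [hRdef, mem_filter]; simp
  have hLR : ∀ x ∈ L, ∀ y ∈ R, x < y := by
    intro x hx y hy
    rw [hmemL] at hx
    rw [hmemR] at hy
    rcases lt_trichotomy x y with h | h | h
    · exact h
    · rw [h] at hx
      exact absurd (hx.trans hy) (lt_irrefl _)
    · have h2 := hd (ne_of_lt hy) (ne_of_gt hx) h
      exact absurd (((hx.trans h2).trans hy).trans h) (lt_irrefl _)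
  have hRimg : R = L.image σ := by
    ext y
    rw [mem_image]
    constructor
    · intro hy
      refine ⟨σ y, ?_, hI y⟩
      rw [hmemL, hI]
      exact (hmemR y).1 hy
    · rintro ⟨x, hx, rfl⟩
      rw [hmemR, hI]
      exact (hmemL x).1 hx
  have hcLR : R.card = L.card := by
    rw [hRimg]
    exact card_image_of_injective _ σ.injective
  have hLLcard : LL.card = L.card := by
    have himg : LL.image Fin.castSucc = L := by
      ext x
      rw [mem_image]
      constructor
      · rintro ⟨t, ht, rfl⟩
        rw [hmemL]
        exact (hmemLL t).1 ht
      · intro hx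
        have hxlt := (hmemL x).1 hx
        have hxne : x ≠ Fin.last m := by
          intro h
          rw [h] at hxlt
          exact absurd hxlt (not_lt.2 (Fin.le_last _))
        obtain ⟨t, rfl⟩ := Fin.exists_castSucc_eq.2 hxne
        exact ⟨t, (hmemLL t).2 hxlt, rfl⟩
    have hcard := card_image_of_injective LL (Fin.castSucc_injective m)
    rw [himg] at hcard
    exact hcard.symm
  have hRRcard : RR.card = L.card := by
    have himg : RR.image Fin.succ = R := by
      ext x
      rw [mem_image]
      constructor
      · rintro ⟨t, ht, rfl⟩
        rw [hmemR]
        exact (hmemRR t).1 ht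
      · intro hx
        have hxlt := (hmemR x).1 hx
        have hxne : x ≠ 0 := by
          intro h
          rw [h] at hxlt
          exact absurd hxlt (not_lt.2 (Fin.zero_le _))
        obtain ⟨t, rfl⟩ := Fin.exists_succ_eq.2 hxne
        exact ⟨t, (hmemRR t).2 hxlt, rfl⟩
    have hcard := card_image_of_injective RR (Fin.succ_injective m)
    rw [himg] at hcard
    rw [← hcard, hcLR]
  have hinter : (LL ∩ RR).card ≤ 1 := by
    rw [card_le_one]
    intro a ha b hb
    rw [mem_inter] at ha hb
    by_contra hne
    rcases Ne.lt_or_gt hne with h | h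
    · have hlt := hLR _ ((hmemL _).2 ((hmemLL b).1 hb.1)) _ ((hmemR _).2 ((hmemRR a).1 ha.2))
      rw [Fin.castSucc_lt_succ_iff] at hlt
      exact absurd h (not_lt.2 hlt)
    · have hlt := hLR _ ((hmemL _).2 ((hmemLL a).1 ha.1)) _ ((hmemR _).2 ((hmemRR b).1 hb.2))
      rw [Fin.castSucc_lt_succ_iff] at hlt
      exact absurd h (not_lt.2 hlt)
  have hTLR : T = LL ∪ RR := by
    ext t
    rw [hTun, mem_union]
  have hjc : T.card + (LL ∩ RR).card = L.card + L.card := by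
    rw [hTLR, card_union_add_card_inter, hLLcard, hRRcard]
  have hLLsubT : LL ⊆ T := fun t ht => (hTun t).2 (Or.inl ht)
  have hRRsubT : RR ⊆ T := fun t ht => (hTun t).2 (Or.inr ht)
  have hsplitLL : ∀ s ∈ LL, ∀ u ∈ T, u ∉ LL → s < u := by
    intro a ha u hu hnu
    have huR : u ∈ RR := ((hTun u).1 hu).resolve_left hnu
    have h1 := hLR _ ((hmemL _).2 ((hmemLL a).1 ha)) _ ((hmemR _).2 ((hmemRR u).1 huR))
    rw [Fin.castSucc_lt_succ_iff] at h1
    rcases eq_or_lt_of_le h1 with he | hl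
    · exact absurd (he ▸ ha) hnu
    · exact hl
  have hrankL : ∀ r : Fin T.card, idx T r ∈ LL ↔ r.val < L.card := by
    intro r
    rw [idx_mem_initial hLLsubT hsplitLL r, hLLcard]
  have hsplitRd : ∀ s ∈ T \ RR, ∀ u ∈ T, u ∉ T \ RR → s < u := by
    intro a ha u hu hnu
    rw [mem_sdiff] at ha
    have haLL : a ∈ LL := ((hTun a).1 ha.1).resolve_right ha.2
    have huRR : u ∈ RR := by
      by_contra h
      exact hnu (mem_sdiff.2 ⟨hu, h⟩)
    have h1 := hLR _ ((hmemL _).2 ((hmemLL a).1 haLL)) _ ((hmemR _).2 ((hmemRR u).1 huRR))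
    rw [Fin.castSucc_lt_succ_iff] at h1
    rcases eq_or_lt_of_le h1 with he | hl
    · exact absurd huRR (he ▸ ha.2)
    · exact hl
  have hsdcard : (T \ RR).card = T.card - L.card := by
    rw [card_sdiff_of_subset hRRsubT, hRRcard]
  have hrankR : ∀ r : Fin T.card, idx T r ∈ RR ↔ ¬ (r.val < T.card - L.card) := by
    intro r
    have h1 := idx_mem_initial (sdiff_subset) hsplitRd r
    rw [hsdcard] at h1
    constructor
    · intro hr hc
      have h2 := h1.2 hc
      rw [mem_sdiff] at h2
      exact h2.2 hr
    · intro hc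
      by_contra hr
      exact hc (h1.1 (mem_sdiff.2 ⟨idx_mem r, hr⟩))
  refine ⟨T, perm_eq_of_dec (fun x => ff_invol T x) hI (dec_ψ T) hd ?_⟩
  intro x
  rw [moved_iff]
  constructor
  · rintro ⟨r, hr, rfl | rfl⟩
    · have hrlt := r.isLt
      have hrL : idx T r ∈ LL := (hrankL r).2 (by omega)
      exact ne_of_gt ((hmemLL _).1 hrL)
    · have hrlt := r.isLt
      have hrR : idx T r.rev ∈ RR := by
        rw [hrankR, Fin.val_rev]
        omega
      exact ne_of_lt ((hmemRR _).1 hrR)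
  · intro hx
    rcases Ne.lt_or_gt hx with h | h
    · -- σ x < x
      have hxne : x ≠ 0 := by
        intro h0
        rw [h0] at h
        exact absurd h (not_lt.2 (Fin.zero_le _))
      obtain ⟨t, rfl⟩ := Fin.exists_succ_eq.2 hxne
      have htRR : t ∈ RR := (hmemRR t).2 h
      obtain ⟨r, hrt⟩ := idx_surj (hRRsubT htRR)
      have hrge : ¬ (r.val < T.card - L.card) := (hrankR r).1 (hrt ▸ htRR)
      have hrlt := r.isLt
      refine ⟨r.rev, ?_, Or.inr ?_⟩
      · rw [Fin.val_rev]
        omega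
      · rw [BB, Fin.rev_rev, hrt]
    · -- x < σ x
      have hxne : x ≠ Fin.last m := by
        intro h0
        rw [h0] at h
        exact absurd h (not_lt.2 (Fin.le_last _))
      obtain ⟨t, rfl⟩ := Fin.exists_castSucc_eq.2 hxne
      have htLL : t ∈ LL := (hmemLL t).2 h
      obtain ⟨r, hrt⟩ := idx_surj (hLLsubT htLL)
      have hrlt2 : r.val < L.card := (hrankL r).1 (hrt ▸ htLL)
      have hrlt := r.isLt
      refine ⟨r, ?_, Or.inl ?_⟩
      · omega
      · rw [AA, hrt]

lemma inv_iff {N : ℕ} (σ : Equiv.Perm (Fin N)) : σ⁻¹ = σ ↔ ∀ x, σ (σ x) = x := by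
  constructor
  · intro h x
    have h2 := σ.symm_apply_apply x
    rwa [show σ.symm = σ from h] at h2
  · intro h
    apply Equiv.ext
    intro x
    have h1 : σ (σ x) = x := h x
    calc σ⁻¹ x = σ⁻¹ (σ (σ x)) := by rw [h1]
    _ = σ x := Equiv.symm_apply_apply σ (σ x)

end SMAux


theorem skewMerged_involutions_count (n k : ℕ) (hn : 1 ≤ n)
    (hk1 : 1 ≤ k) (hk2 : k ≤ n) :
    Nat.card {σ : Equiv.Perm (Fin n) // SkewMerged σ ∧ σ⁻¹ = σ ∧ lisLen σ = k} =
        (n - 1).choose (k - 1) ∧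
      Nat.card {σ : Equiv.Perm (Fin n) // SkewMerged σ ∧ σ⁻¹ = σ} = 2 ^ (n - 1) := by
  obtain ⟨m, rfl⟩ : ∃ m, n = m + 1 := ⟨n - 1, by omega⟩
  have hsm : ∀ T : Finset (Fin m), SkewMerged (SMAux.ψ T) :=
    fun T => (SMAux.dec_ψ T).skewMerged
  have hinv : ∀ T : Finset (Fin m), (SMAux.ψ T)⁻¹ = SMAux.ψ T := fun T => SMAux.ψ_inv T
  constructor
  · have hb : Function.Bijective (fun T : {T : Finset (Fin m) // T.card = m + 1 - k} =>
        (⟨SMAux.ψ T.1, hsm T.1, hinv T.1, by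
            rw [SMAux.lis_ψ]
            have := T.2
            omega⟩ :
          {σ : Equiv.Perm (Fin (m + 1)) // SkewMerged σ ∧ σ⁻¹ = σ ∧ lisLen σ = k})) := by
      constructor
      · intro T T' h
        apply Subtype.ext
        exact SMAux.ψ_injective (congrArg Subtype.val h)
      · rintro ⟨σ, h1, h2, h3⟩
        obtain ⟨T, rfl⟩ := SMAux.ψ_surjective ((SMAux.inv_iff σ).1 h2) h1
        have hc := SMAux.card_T_le T
        have hl := SMAux.lis_ψ T
        exact ⟨⟨T, by omega⟩, rfl⟩
    rw [← Nat.card_eq_of_bijective _ hb, Nat.card_eq_fintype_card,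
      Fintype.card_finset_len, Fintype.card_fin]
    have h1 : m + 1 - k = m - (k - 1) := by omega
    have h2 : m + 1 - 1 = m := by omega
    rw [h1, h2, Nat.choose_symm (by omega : k - 1 ≤ m)]
  · have hb : Function.Bijective (fun T : Finset (Fin m) =>
        (⟨SMAux.ψ T, hsm T, hinv T⟩ :
          {σ : Equiv.Perm (Fin (m + 1)) // SkewMerged σ ∧ σ⁻¹ = σ})) := by
      constructor
      · intro T T' h
        exact SMAux.ψ_injective (congrArg Subtype.val h)
      · rintro ⟨σ, h1, h2⟩
        obtain ⟨T, rfl⟩ := SMAux.ψ_surjective ((SMAux.inv_iff σ).1 h2) h1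
        exact ⟨T, rfl⟩
    rw [← Nat.card_eq_of_bijective _ hb, Nat.card_eq_fintype_card,
      Fintype.card_finset, Fintype.card_fin]
    have h2 : m + 1 - 1 = m := by omega
    rw [h2]
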